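/- arXiv:1412.7512 — 2 statements merged into one kernel-verified Lean document; each statement's English description precedes it below -/
import Mathlib

section
/- Let β_{1−ε}(X^l, q) denote the Neyman–Pearson beta function between the channel law f_{Y^l|X^l}(·|X^l) and an auxiliary output density q. If both the channel law and q are invariant under the simultaneous/respective unitary transformations f_{Y|X}(Y | V^H X) = f_{Y|X}(V Y | X) and q(VY) = q(Y) for every unitary V, then β_{1−ε}(X^l, q) depends on the codeword X^l = [X_1,...,X_l] only through the eigenvalues of X_k X_k^H, k = 1,...,l. -/
open Matrix MeasureTheory

noncomputable instance matMeasurableSpace (n m : ℕ) : MeasurableSpace (Matrix (Fin n) (Fin m) ℂ) :=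
  inferInstanceAs (MeasurableSpace (Fin n → Fin m → ℂ))

/-- The Neyman–Pearson beta function: `β_α(P,Q) = inf { Q(A) : A measurable, P(A) ≥ α }`. -/
noncomputable def npBeta {Ω : Type*} [MeasurableSpace Ω] (α : ENNReal) (P Q : Measure Ω) :
    ENNReal :=
  ⨅ (A : Set Ω) (_ : MeasurableSet A) (_ : α ≤ P A), Q A

lemma measurable_matMul {n m r : ℕ} (V : Matrix (Fin n) (Fin m) ℂ) :
    Measurable (fun Y : Matrix (Fin m) (Fin r) ℂ => V * Y) := by
  apply measurable_pi_lambda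
  intro i
  apply measurable_pi_lambda
  intro j
  have : (fun Y : Matrix (Fin m) (Fin r) ℂ => (V * Y) i j)
      = fun Y => ∑ k, V i k * Y k j := by
    funext Y; rfl
  rw [this]
  exact Finset.measurable_sum _ fun k _ =>
    measurable_const.mul ((measurable_pi_apply j).comp (measurable_pi_apply k))

lemma npBeta_map {Ω Ω' : Type*} [MeasurableSpace Ω] [MeasurableSpace Ω']
    (α : ENNReal) (P Q : Measure Ω) (f : Ω → Ω') (g : Ω' → Ω)
    (hf : Measurable f) (hg : Measurable g)
    (hgf : ∀ x, g (f x) = x) (hfg : ∀ y, f (g y) = y) :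
    npBeta α (Measure.map f P) (Measure.map f Q) = npBeta α P Q := by
  have hpre : ∀ A : Set Ω', f ⁻¹' (g ⁻¹' (f ⁻¹' A)) = f ⁻¹' A := by
    intro A; ext x; simp [hgf]
  have hpre2 : ∀ A : Set Ω, f ⁻¹' (g ⁻¹' A) = A := by
    intro A; ext x; simp [hgf]
  apply le_antisymm
  · refine le_iInf fun A => le_iInf fun hA => le_iInf fun hP => ?_
    have hB : MeasurableSet (g ⁻¹' A) := hg hA
    have h1 : (Measure.map f P) (g ⁻¹' A) = P A := by
      rw [Measure.map_apply hf hB, hpre2]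
    have h2 : (Measure.map f Q) (g ⁻¹' A) = Q A := by
      rw [Measure.map_apply hf hB, hpre2]
    calc npBeta α (Measure.map f P) (Measure.map f Q)
        ≤ (Measure.map f Q) (g ⁻¹' A) :=
          iInf_le_of_le (g ⁻¹' A) (iInf_le_of_le hB (iInf_le_of_le (h1 ▸ hP) le_rfl))
      _ = Q A := h2
  · refine le_iInf fun B => le_iInf fun hB => le_iInf fun hP => ?_
    have hA : MeasurableSet (f ⁻¹' B) := hf hB
    rw [Measure.map_apply hf hB] at hP
    calc npBeta α P Q ≤ Q (f ⁻¹' B) :=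
          iInf_le_of_le (f ⁻¹' B) (iInf_le_of_le hA (iInf_le_of_le hP le_rfl))
      _ = (Measure.map f Q) B := (Measure.map_apply hf hB).symm

/-- If the per-block channel law satisfies `Pb (V X) = (V ·)_* (Pb X)` for every unitary `V`
(the invariance `f_{Y|X}(Y|Vᴴ X) = f_{Y|X}(V Y|X)`), depends on its input only through
`X Xᴴ`, and the auxiliary output law `Qb` is unitarily invariant, then the Neyman–Pearson
beta function `β_α(X^l, q)` between the product channel law `⊗_k Pb (X_k)` and the product
auxiliary law `⊗_k Qb` depends on the codeword `X^l = [X_1,…,X_l]` only through the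
eigenvalues of `X_k X_kᴴ`, `k = 1,…,l` (equality of the eigenvalues of the Hermitian
matrices `X_k X_kᴴ` and `X'_k X'_kᴴ` being expressed as unitary similarity). -/
theorem npBeta_depends_only_on_eigenvalues
    (l nc mt r : ℕ)
    (Pb : Matrix (Fin nc) (Fin mt) ℂ → Measure (Matrix (Fin nc) (Fin r) ℂ))
    (Qb : Measure (Matrix (Fin nc) (Fin r) ℂ))
    (hPprob : ∀ X, IsProbabilityMeasure (Pb X)) [IsProbabilityMeasure Qb]
    (hPinv : ∀ V ∈ Matrix.unitaryGroup (Fin nc) ℂ, ∀ X,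
      Pb (V * X) = Measure.map (fun Y => V * Y) (Pb X))
    (hPgram : ∀ X X' : Matrix (Fin nc) (Fin mt) ℂ, X * Xᴴ = X' * X'ᴴ → Pb X = Pb X')
    (hQinv : ∀ V ∈ Matrix.unitaryGroup (Fin nc) ℂ,
      Measure.map (fun Y => V * Y) Qb = Qb)
    (X X' : Fin l → Matrix (Fin nc) (Fin mt) ℂ)
    (hsim : ∀ k : Fin l, ∃ V ∈ Matrix.unitaryGroup (Fin nc) ℂ,
      X' k * (X' k)ᴴ = V * (X k * (X k)ᴴ) * Vᴴ)
    (α : ENNReal) :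
    npBeta α (Measure.pi fun k => Pb (X k)) (Measure.pi fun _ => Qb) =
      npBeta α (Measure.pi fun k => Pb (X' k)) (Measure.pi fun _ => Qb) := by
  choose V hVmem hVsim using hsim
  -- each component map is measure preserving
  have hPk : ∀ k, Pb (X' k) = Measure.map (fun Y => V k * Y) (Pb (X k)) := by
    intro k
    have hgram : X' k * (X' k)ᴴ = (V k * X k) * (V k * X k)ᴴ := by
      rw [hVsim k, conjTranspose_mul]
      simp [Matrix.mul_assoc]
    rw [hPgram _ _ hgram, hPinv (V k) (hVmem k) (X k)]
  haveI : ∀ k : Fin l, SigmaFinite (Pb (X' k)) := fun k => haveI := hPprob (X' k); inferInstance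
  have hMP : ∀ k : Fin l,
      MeasurePreserving (fun Y => V k * Y) (Pb (X k)) (Pb (X' k)) :=
    fun k => ⟨measurable_matMul (V k), (hPk k).symm⟩
  have hMQ : ∀ k : Fin l,
      MeasurePreserving (fun Y => V k * Y) Qb Qb :=
    fun k => ⟨measurable_matMul (V k), hQinv (V k) (hVmem k)⟩
  have hT := MeasureTheory.measurePreserving_pi (fun k => Pb (X k)) (fun k => Pb (X' k)) hMP
  have hTQ := MeasureTheory.measurePreserving_pi (fun _ : Fin l => Qb) (fun _ => Qb) hMQ
  have hinv1 : ∀ k, (V k)ᴴ * V k = 1 := fun k => (hVmem k).1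
  have hinv2 : ∀ k, V k * (V k)ᴴ = 1 := fun k => (hVmem k).2
  have key : npBeta α (Measure.pi fun k => Pb (X k)) (Measure.pi fun _ => Qb)
      = npBeta α (Measure.map (fun a k => V k * a k) (Measure.pi fun k => Pb (X k)))
          (Measure.map (fun a k => V k * a k) (Measure.pi fun _ : Fin l => Qb)) := by
    refine (npBeta_map α _ _ _ (fun a k => (V k)ᴴ * a k) hT.measurable
      (measurable_pi_lambda _ fun k =>
        (measurable_matMul ((V k)ᴴ)).comp (measurable_pi_apply k)) ?_ ?_).symm
    · intro x; funext k
      simp [← Matrix.mul_assoc, hinv1 k]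
    · intro y; funext k
      simp [← Matrix.mul_assoc, hinv2 k]
  rw [key, hT.map_eq, hTQ.map_eq]
end

section
/- The Neyman–Pearson beta function lower bound: for probability measures P and Q with ln(dP/dQ) well defined, and any λ ∈ ℝ and α ∈ (0,1), β_α(P,Q) ≥ e^{−λ}( α − P{ ln(dP/dQ) > λ } ), equivalently β_{1−ε}(P,Q) ≥ e^{−λ}( P{ ln(dP/dQ) ≤ λ } − ε ). -/
open MeasureTheory

/-- Neyman–Pearson beta function lower bound: if `f = ln(dP/dQ)` (expressed via
`P = Q.withDensity (exp ∘ f)`), then for any `λ ∈ ℝ` and `α ∈ (0,1)`,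
`β_α(P,Q) ≥ e^{−λ}(α − P{f > λ})`; equivalently, with `α = 1 − ε`,
`β_{1−ε}(P,Q) ≥ e^{−λ}(P{f ≤ λ} − ε)`. -/
theorem npBeta_lower_bound
    {Ω : Type*} [MeasurableSpace Ω] (P Q : Measure Ω)
    [IsProbabilityMeasure P] [IsProbabilityMeasure Q]
    (f : Ω → ℝ) (hf : Measurable f)
    (hdens : P = Q.withDensity fun ω => ENNReal.ofReal (Real.exp (f ω)))
    (lam α : ℝ) (hα : 0 < α) (hα1 : α < 1) :
    ENNReal.ofReal (Real.exp (-lam) * (α - (P {ω | lam < f ω}).toReal)) ≤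
      npBeta (ENNReal.ofReal α) P Q ∧
    ∀ ε : ℝ, ε = 1 - α →
      ENNReal.ofReal (Real.exp (-lam) * ((P {ω | f ω ≤ lam}).toReal - ε)) ≤
        npBeta (ENNReal.ofReal (1 - ε)) P Q := by
  have hSc : MeasurableSet {ω | f ω ≤ lam} := measurableSet_le hf measurable_const
  have hPSne : P {ω | lam < f ω} ≠ ⊤ := measure_ne_top _ _
  set p := (P {ω | lam < f ω}).toReal with hp
  have key : ENNReal.ofReal (Real.exp (-lam) * (α - p)) ≤ npBeta (ENNReal.ofReal α) P Q := by
    refine le_iInf fun A => le_iInf fun hA => le_iInf fun hαA => ?_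
    have hsub : A ⊆ (A ∩ {ω | f ω ≤ lam}) ∪ {ω | lam < f ω} := by
      intro x hx
      by_cases h : f x ≤ lam
      · exact Or.inl ⟨hx, h⟩
      · exact Or.inr (lt_of_not_ge h)
    have h1 : P A ≤ P (A ∩ {ω | f ω ≤ lam}) + P {ω | lam < f ω} :=
      (measure_mono hsub).trans (measure_union_le _ _)
    have h2 : P (A ∩ {ω | f ω ≤ lam}) ≤ ENNReal.ofReal (Real.exp lam) * Q A := by
      rw [hdens, withDensity_apply _ (hA.inter hSc)]
      calc ∫⁻ ω in A ∩ {ω | f ω ≤ lam}, ENNReal.ofReal (Real.exp (f ω)) ∂Q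
          ≤ ∫⁻ _ in A ∩ {ω | f ω ≤ lam}, ENNReal.ofReal (Real.exp lam) ∂Q := by
            refine setLIntegral_mono measurable_const fun ω hω => ?_
            exact ENNReal.ofReal_le_ofReal (Real.exp_le_exp.mpr hω.2)
        _ = ENNReal.ofReal (Real.exp lam) * Q (A ∩ {ω | f ω ≤ lam}) := by
            rw [setLIntegral_const]
        _ ≤ ENNReal.ofReal (Real.exp lam) * Q A :=
            mul_le_mul_right (measure_mono Set.inter_subset_left) _
    have h3 : ENNReal.ofReal α ≤ ENNReal.ofReal (Real.exp lam) * Q A + P {ω | lam < f ω} :=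
      hαA.trans (h1.trans (add_le_add_left h2 _))
    have h4 : ENNReal.ofReal α - P {ω | lam < f ω} ≤ ENNReal.ofReal (Real.exp lam) * Q A :=
      tsub_le_iff_right.mpr h3
    have h5 : ENNReal.ofReal (Real.exp (-lam)) * (ENNReal.ofReal α - P {ω | lam < f ω}) ≤
        ENNReal.ofReal (Real.exp (-lam)) * (ENNReal.ofReal (Real.exp lam) * Q A) :=
      mul_le_mul_right h4 _
    have heq : ENNReal.ofReal (Real.exp (-lam)) * (ENNReal.ofReal (Real.exp lam) * Q A) = Q A := by
      rw [← mul_assoc, ← ENNReal.ofReal_mul (Real.exp_nonneg _), ← Real.exp_add,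
        neg_add_cancel, Real.exp_zero, ENNReal.ofReal_one, one_mul]
    refine le_trans ?_ (heq ▸ h5)
    rw [ENNReal.ofReal_mul (Real.exp_nonneg _), ENNReal.ofReal_sub _ ENNReal.toReal_nonneg,
      ENNReal.ofReal_toReal hPSne]
  refine ⟨key, fun ε hε => ?_⟩
  have hcompl : {ω | lam < f ω} = {ω | f ω ≤ lam}ᶜ := by
    ext ω; simp only [Set.mem_setOf_eq, Set.mem_compl_iff, not_le]
  have hsum : (P {ω | f ω ≤ lam}).toReal + p = 1 := by
    rw [hp, hcompl, ← ENNReal.toReal_add (measure_ne_top _ _) (measure_ne_top _ _),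
      measure_add_measure_compl hSc, measure_univ, ENNReal.toReal_one]
  have hP1 : (P {ω | f ω ≤ lam}).toReal = 1 - p := by linarith
  have h1ε : (1 : ℝ) - ε = α := by rw [hε]; ring
  have harg : (P {ω | f ω ≤ lam}).toReal - ε = α - p := by
    rw [hP1, hε]; ring
  rw [harg, h1ε]
  exact key
end
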